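/- Let 𝔊 be a Lie superalgebra over a field k of characteristic ≠ 2 such that the even part 𝔊₀ is a simple Lie algebra. If V₁ and V₂ are 𝔊₀-submodules of the odd part 𝔊₁ with V₁ ∩ V₂ = 0 and [V₁, V₁] ≠ 0, then V₂ is a trivial 𝔊₀-module and [V₂, V₂] = 0. -/

import Mathlib

/-- Let 𝔊 be a Lie superalgebra over a field k of characteristic ≠ 2 such that
the even part 𝔊₀ is a simple Lie algebra (here `L`), with odd part `M`, the odd bracket being
the symmetric bilinear `G`-equivariant map `br : M → M → L` satisfying the super-Jacobi identity.
If `V₁` and `V₂` are `L`-submodules of `M` with `V₁ ⊓ V₂ = ⊥` and `[V₁, V₁] ≠ 0`, then `V₂` is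
a trivial `L`-module and `[V₂, V₂] = 0`. -/
theorem stmt0 {k L M : Type} [Field k] (hchar : ringChar k ≠ 2)
    [LieRing L] [LieAlgebra k L]
    [AddCommGroup M] [Module k M] [LieRingModule L M] [LieModule k L M]
    (hsimple : LieAlgebra.IsSimple k L)
    (br : M →ₗ[k] M →ₗ[k] L)
    (hsymm : ∀ x y : M, br x y = br y x)
    (hequiv : ∀ (g : L) (x y : M), ⁅g, br x y⁆ = br ⁅g, x⁆ y + br x ⁅g, y⁆)
    (hjacobi : ∀ x y z : M, ⁅br x y, z⁆ + ⁅br y z, x⁆ + ⁅br z x, y⁆ = 0)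
    (V₁ V₂ : Submodule k M)
    (hV₁ : ∀ (g : L), ∀ x ∈ V₁, ⁅g, x⁆ ∈ V₁)
    (hV₂ : ∀ (g : L), ∀ x ∈ V₂, ⁅g, x⁆ ∈ V₂)
    (hdisj : V₁ ⊓ V₂ = ⊥)
    (hnonzero : ∃ x ∈ V₁, ∃ y ∈ V₁, br x y ≠ 0) :
    (∀ (g : L), ∀ x ∈ V₂, ⁅g, x⁆ = 0) ∧ ∀ x ∈ V₂, ∀ y ∈ V₂, br x y = 0 := by
  haveI := hsimple
  -- Step A: generators of [V₁,V₁] annihilate V₂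
  have keyA : ∀ p ∈ V₁, ∀ q ∈ V₁, ∀ w ∈ V₂, ⁅br p q, w⁆ = 0 := by
    intro p hp q hq w hw
    have hj := hjacobi p w q
    have h1 : ⁅br q p, w⁆ = -(⁅br p w, q⁆ + ⁅br w q, p⁆) :=
      eq_neg_of_add_eq_zero_right hj
    have hmem1 : ⁅br q p, w⁆ ∈ V₁ := by
      rw [h1]
      exact neg_mem (add_mem (hV₁ _ _ hq) (hV₁ _ _ hp))
    have hmem2 : ⁅br q p, w⁆ ∈ V₂ := hV₂ _ _ hw
    have : ⁅br q p, w⁆ ∈ V₁ ⊓ V₂ := ⟨hmem1, hmem2⟩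
    rw [hdisj, Submodule.mem_bot] at this
    rw [hsymm p q, this]
  -- the span of [V₁,V₁]
  set gen : Set L := {a | ∃ x ∈ V₁, ∃ y ∈ V₁, a = br x y} with hgen
  set S : Submodule k L := Submodule.span k gen with hS
  have hlie : ∀ (g : L), ∀ m ∈ S, ⁅g, m⁆ ∈ S := by
    intro g m hm
    induction hm using Submodule.span_induction with
    | mem a ha =>
      obtain ⟨x, hx, y, hy, rfl⟩ := ha
      rw [hequiv]
      exact add_mem (Submodule.subset_span ⟨_, hV₁ g x hx, _, hy, rfl⟩)
        (Submodule.subset_span ⟨_, hx, _, hV₁ g y hy, rfl⟩)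
    | zero => rw [lie_zero]; exact zero_mem S
    | add a b _ _ ha hb => rw [lie_add]; exact add_mem ha hb
    | smul c a _ ha => rw [lie_smul]; exact Submodule.smul_mem S c ha
  let J : LieIdeal k L :=
    { S with lie_mem := fun {g m} hm => hlie g m hm }
  have hJbot : J ≠ ⊥ := by
    obtain ⟨x, hx, y, hy, hne⟩ := hnonzero
    intro hb
    apply hne
    have : br x y ∈ J := Submodule.subset_span ⟨_, hx, _, hy, rfl⟩
    rw [hb, LieSubmodule.mem_bot] at this
    exact this
  have hJtop : J = ⊤ := (LieAlgebra.IsSimple.eq_bot_or_eq_top J).resolve_left hJbot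
  -- Part 1: L annihilates V₂
  have part1 : ∀ (g : L), ∀ x ∈ V₂, ⁅g, x⁆ = 0 := by
    intro g w hw
    have hg : g ∈ S := by
      have : g ∈ J := by rw [hJtop]; trivial
      exact this
    induction hg using Submodule.span_induction with
    | mem a ha =>
      obtain ⟨x, hx, y, hy, rfl⟩ := ha
      exact keyA x hx y hy w hw
    | zero => exact zero_lie w
    | add a b _ _ ha hb => rw [add_lie, ha, hb, add_zero]
    | smul c a _ ha => rw [smul_lie, ha, smul_zero]
  refine ⟨part1, ?_⟩
  intro x hx y hy
  have hcentral : ∀ g : L, ⁅g, br x y⁆ = 0 := by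
    intro g
    simp [hequiv, part1 g x hx, part1 g y hy]
  have hmem : br x y ∈ LieAlgebra.center k L := by
    intro g
    exact hcentral g
  rw [LieAlgebra.center_eq_bot, LieSubmodule.mem_bot] at hmem
  exact hmem
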